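/- Let K = Q(√D) with D squarefree, D ∉ {0,1}, p a prime dividing D, and G an integral Z-valued generalized quadratic form in n variables over K. If Q is the quadratic form in 2n variables associated to G, with Gram matrix M_Q, then the rank of M_Q modulo p is at most n. -/

import Mathlib

open Matrix

lemma rat_int_of_sq_mul (q : ℚ) (d : ℤ) (hd : Squarefree d) (m : ℤ)
    (h : q ^ 2 * (d : ℚ) = (m : ℚ)) : ∃ z : ℤ, (z : ℚ) = q := by
  have hq : (q.num : ℚ) / (q.den : ℚ) = q := Rat.num_div_den q
  have hden : ((q.den : ℚ)) ≠ 0 := by exact_mod_cast q.den_ne_zero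
  have h' : ((q.num ^ 2 * d : ℤ) : ℚ) = ((m * (q.den : ℤ) ^ 2 : ℤ) : ℚ) := by
    push_cast
    rw [← hq] at h
    field_simp at h
    linarith
  have h2 : q.num ^ 2 * d = m * (q.den : ℤ) ^ 2 := by exact_mod_cast h'
  have hcop : IsCoprime (q.num) (q.den : ℤ) := by
    rw [Int.isCoprime_iff_gcd_eq_one]
    exact q.reduced
  have hdvd : ((q.den : ℤ)) ^ 2 ∣ d := by
    have : ((q.den : ℤ)) ^ 2 ∣ q.num ^ 2 * d := ⟨m, by linarith [h2]⟩
    exact (IsCoprime.pow hcop.symm).dvd_of_dvd_mul_left this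
  have hunit : IsUnit ((q.den : ℤ)) := hd _ (by rwa [← sq])
  have hden1 : q.den = 1 := by
    have := Int.isUnit_iff.mp hunit
    omega
  exact ⟨q.num, by rw [← hq, hden1]; simp⟩

lemma no_rat_sqrt (D : ℤ) (hsq : Squarefree D) (hD0 : D ≠ 0) (hD1 : D ≠ 1)
    (q : ℚ) : q ^ 2 ≠ (D : ℚ) := by
  intro h
  obtain ⟨z, hz⟩ := rat_int_of_sq_mul q D hsq (D * D) (by rw [h]; push_cast; ring)
  have hz2 : z ^ 2 = D := by
    have : ((z ^ 2 : ℤ) : ℚ) = ((D : ℤ) : ℚ) := by push_cast; rw [hz, h]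
    exact_mod_cast this
  have : IsUnit z := hsq z (by rw [← sq, hz2])
  rcases Int.isUnit_iff.mp this with h1 | h1 <;> rw [h1] at hz2 <;> norm_num at hz2 <;> omega

lemma rat_integral {K : Type*} [Field K] [Algebra ℚ K] (q : ℚ)
    (h : IsIntegral ℤ ((q : K))) : ∃ z : ℤ, (z : ℚ) = q := by
  haveI : IsScalarTower ℤ ℚ K := IsScalarTower.of_algebraMap_eq (fun x => by simp)
  have h1 : IsIntegral ℤ q := by
    rw [show ((q : K)) = algebraMap ℚ K q from (eq_ratCast (algebraMap ℚ K) q).symm] at h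
    exact (isIntegral_algebraMap_iff (algebraMap ℚ K).injective).mp h
  obtain ⟨z, hz⟩ := IsIntegrallyClosed.isIntegral_iff.mp h1
  exact ⟨z, by exact_mod_cast hz⟩

lemma int_coords {K : Type*} [Field K] [Algebra ℚ K] (D : ℤ) (hsqf : Squarefree D)
    (sd : K) (hsd : sd ^ 2 = (D : K)) (τ : K →ₐ[ℚ] K) (hτ : τ sd = -sd)
    (x : K) (hx : IsIntegral ℤ x) (u v : ℚ) (hxuv : x = (u : K) + (v : K) * sd) :
    (∃ U : ℤ, (U : ℚ) = 2 * u) ∧ (∃ V : ℤ, (V : ℚ) = 2 * v) ∧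
      (2 ∣ D → (∃ U : ℤ, (U : ℚ) = u) ∧ (∃ V : ℤ, (V : ℚ) = v)) := by
  haveI : CharZero K := charZero_of_injective_algebraMap (algebraMap ℚ K).injective
  have hτx : τ x = (u : K) - (v : K) * sd := by
    rw [hxuv, _root_.map_add, _root_.map_mul, hτ, map_ratCast, map_ratCast]; ring
  have hτint : IsIntegral ℤ (τ x) := hx.map τ.toRingHom.toIntAlgHom
  have htr : IsIntegral ℤ (((2 * u : ℚ) : K)) := by
    have := hx.add hτint
    rwa [hτx, hxuv, show ((u:K) + (v:K)*sd) + ((u:K) - (v:K)*sd) = ((2*u:ℚ):K) by push_cast; ring] at this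
  obtain ⟨U, hU⟩ := rat_integral _ htr
  have hsq : IsIntegral ℤ ((( (2*v)^2 * (D:ℚ) : ℚ) : K)) := by
    have := (hx.sub hτint).mul (hx.sub hτint)
    rwa [hτx, hxuv, show ((u:K) + (v:K)*sd - ((u:K) - (v:K)*sd)) * ((u:K) + (v:K)*sd - ((u:K) - (v:K)*sd))
      = (2*(v:K))^2 * sd^2 by ring, hsd,
      show (2*(v:K))^2 * ((D:ℤ):K) = (((2*v)^2 * (D:ℚ) : ℚ) : K) by push_cast; ring] at this
  obtain ⟨m, hm⟩ := rat_integral _ hsq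
  obtain ⟨V, hV⟩ := rat_int_of_sq_mul (2*v) D hsqf m hm.symm
  refine ⟨⟨U, hU⟩, ⟨V, hV⟩, fun h2D => ?_⟩
  have hnm : IsIntegral ℤ (((u^2 - v^2 * D : ℚ) : K)) := by
    have := hx.mul hτint
    rwa [hτx, hxuv, show ((u:K) + (v:K)*sd) * ((u:K) - (v:K)*sd) = (u:K)^2 - (v:K)^2 * sd^2 by ring,
      hsd, show (u:K)^2 - (v:K)^2 * ((D:ℤ):K) = ((u^2 - v^2*D : ℚ) : K) by push_cast; ring] at this
  obtain ⟨Nm, hNm⟩ := rat_integral _ hnm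
  have hkey : U^2 - D * V^2 = 4 * Nm := by
    have : ((U^2 - D*V^2 : ℤ) : ℚ) = ((4*Nm : ℤ) : ℚ) := by
      push_cast; rw [hU, hV, hNm]; ring
    exact_mod_cast this
  have hD4 : D % 4 = 2 := by
    have h4 : ¬ ((2:ℤ) * 2 ∣ D) := by
      intro hd
      have := hsqf 2 hd
      rw [Int.isUnit_iff] at this
      omega
    omega
  have hz4 : ((U : ZMod 4))^2 = 2 * ((V : ZMod 4))^2 := by
    have h1 : ((U^2 - D*V^2 : ℤ) : ZMod 4) = ((4*Nm : ℤ) : ZMod 4) := by rw [hkey]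
    have hD2 : ((D : ZMod 4)) = 2 := by
      have : D = 4 * (D / 4) + 2 := by omega
      rw [this]; push_cast; rw [show (4:ZMod 4) = 0 by decide]; ring
    push_cast at h1
    rw [hD2] at h1
    have : ((4 : ZMod 4)) = 0 := by decide
    rw [this] at h1
    linear_combination h1
  have hdec : ∀ a b : ZMod 4, a^2 = 2*b^2 → (a = 0 ∨ a = 2) ∧ (b = 0 ∨ b = 2) := by decide
  obtain ⟨hUc, hVc⟩ := hdec _ _ hz4
  have hdvd2 : ∀ w : ℤ, ((w : ZMod 4) = 0 ∨ (w : ZMod 4) = 2) → (2:ℤ) ∣ w := by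
    intro w hw
    have h4 : ((4:ℕ):ℤ) ∣ w ∨ ((4:ℕ):ℤ) ∣ (w - 2) := by
      rcases hw with h | h
      · exact Or.inl ((ZMod.intCast_zmod_eq_zero_iff_dvd w 4).mp h)
      · refine Or.inr ((ZMod.intCast_zmod_eq_zero_iff_dvd _ 4).mp ?_)
        push_cast
        rw [h]
        decide
    push_cast at h4
    omega
  have hU2 : (2:ℤ) ∣ U := hdvd2 U hUc
  have hV2 : (2:ℤ) ∣ V := hdvd2 V hVc
  refine ⟨⟨U/2, ?_⟩, ⟨V/2, ?_⟩⟩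
  · obtain ⟨k, rfl⟩ := hU2
    rw [Int.mul_ediv_cancel_left _ (by norm_num)]
    push_cast at hU ⊢; linarith
  · obtain ⟨k, rfl⟩ := hV2
    rw [Int.mul_ediv_cancel_left _ (by norm_num)]
    push_cast at hV ⊢; linarith

lemma uniq_coords {K : Type*} [Field K] [Algebra ℚ K] (D : ℤ) (hsq : Squarefree D)
    (hD0 : D ≠ 0) (hD1 : D ≠ 1) (sd : K) (hsd : sd ^ 2 = (D : K)) :
    ∀ a b : ℚ, (a : K) + (b : K) * sd = 0 → a = 0 ∧ b = 0 := by
  haveI : CharZero K := charZero_of_injective_algebraMap (algebraMap ℚ K).injective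
  intro a b h
  by_cases hb : b = 0
  · subst hb
    push_cast at h
    simp at h
    exact ⟨by exact_mod_cast h, rfl⟩
  · exfalso
    have hK : ((a:K))^2 = ((D:ℤ):K) * ((b:K))^2 := by
      linear_combination ((a:K) - (b:K)*sd)*h + ((b:K))^2*hsd
    have hq : a^2 = (D:ℚ) * b^2 := by exact_mod_cast hK
    apply no_rat_sqrt D hsq hD0 hD1 (a/b)
    field_simp
    linarith

lemma entry_relations {K : Type*} [Field K] [Algebra ℚ K] [CharZero K] (D : ℤ) (sd : K)
    (hsd : sd ^ 2 = (D : K))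
    (huniq : ∀ a b : ℚ, (a : K) + (b : K) * sd = 0 → a = 0 ∧ b = 0)
    (c e : ℚ) (w tw x1 x2 x3 x4 : K)
    (hw : w = (c:K) + (e:K)*sd) (htw : tw = (c:K) - (e:K)*sd)
    (u1 v1 u2 v2 u3 v3 u4 v4 : ℚ)
    (hx1 : x1 = (u1:K) + (v1:K)*sd) (hx2 : x2 = (u2:K) + (v2:K)*sd)
    (hx3 : x3 = (u3:K) + (v3:K)*sd) (hx4 : x4 = (u4:K) + (v4:K)*sd)
    (n0 n1 n2 n3 : ℚ)
    (k1 : ((n0 : ℚ) : K) = x1 + x2 + x3 + x4)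
    (k2 : ((n1 : ℚ) : K) = w*(x1+x3) + tw*(x2+x4))
    (k3 : ((n2 : ℚ) : K) = w*(x1+x2) + tw*(x3+x4))
    (k4 : ((n3 : ℚ) : K) = w^2*x1 + w*tw*(x2+x3) + tw^2*x4) :
    (n0 = u1+u2+u3+u4) ∧ (v1+v2+v3+v4 = 0) ∧
    (n1 = c*(u1+u2+u3+u4) + e*D*(v1+v3-v2-v4)) ∧ (c*(v1+v2+v3+v4) + e*(u1+u3-u2-u4) = 0) ∧
    (n2 = c*(u1+u2+u3+u4) + e*D*(v1+v2-v3-v4)) ∧ (c*(v1+v2+v3+v4) + e*(u1+u2-u3-u4) = 0) ∧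
    (n3 = (c^2+e^2*D)*(u1+u4) + (c^2-e^2*D)*(u2+u3) + 2*c*e*D*(v1-v4)) ∧
    ((c^2+e^2*D)*(v1+v4) + (c^2-e^2*D)*(v2+v3) + 2*c*e*(u1-u4) = 0) := by
  have hw2 : w^2 = ((c^2+e^2*D : ℚ):K) + ((2*c*e : ℚ):K)*sd := by
    rw [hw]; push_cast; linear_combination ((e:K)*(e:K))*hsd
  have hwtw : w*tw = ((c^2-e^2*D : ℚ):K) := by
    rw [hw, htw]; push_cast; linear_combination (-(e:K)*(e:K))*hsd
  have htw2 : tw^2 = ((c^2+e^2*D : ℚ):K) - ((2*c*e : ℚ):K)*sd := by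
    rw [htw]; push_cast; linear_combination ((e:K)*(e:K))*hsd
  have h1 := huniq (n0 - (u1+u2+u3+u4)) (-(v1+v2+v3+v4)) (by
    rw [hx1, hx2, hx3, hx4] at k1
    push_cast
    linear_combination k1)
  have h2 := huniq (n1 - (c*(u1+u2+u3+u4) + e*D*(v1+v3-v2-v4)))
      (-(c*(v1+v2+v3+v4) + e*(u1+u3-u2-u4))) (by
    rw [hx1, hx2, hx3, hx4, hw, htw] at k2
    push_cast
    linear_combination k2 + ((e:K)*((v1:K)+(v3:K)-(v2:K)-(v4:K)))*hsd)
  have h3 := huniq (n2 - (c*(u1+u2+u3+u4) + e*D*(v1+v2-v3-v4)))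
      (-(c*(v1+v2+v3+v4) + e*(u1+u2-u3-u4))) (by
    rw [hx1, hx2, hx3, hx4, hw, htw] at k3
    push_cast
    linear_combination k3 + ((e:K)*((v1:K)+(v2:K)-(v3:K)-(v4:K)))*hsd)
  have h4 := huniq (n3 - ((c^2+e^2*D)*(u1+u4) + (c^2-e^2*D)*(u2+u3) + 2*c*e*D*(v1-v4)))
      (-((c^2+e^2*D)*(v1+v4) + (c^2-e^2*D)*(v2+v3) + 2*c*e*(u1-u4))) (by
    rw [hx1, hx2, hx3, hx4, hw2, hwtw, htw2] at k4
    push_cast at k4 ⊢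
    linear_combination k4 + ((2:K)*(c:K)*(e:K)*((v1:K)-(v4:K)))*hsd)
  refine ⟨by linarith [h1.1], by linarith [h1.2], by linarith [h2.1], by linarith [h2.2],
    by linarith [h3.1], by linarith [h3.2], by linarith [h4.1], by linarith [h4.2]⟩

/-- Let p be a prime dividing D and G an integral ℤ-valued generalized quadratic form
in n variables over K = ℚ(√D). If M_Q is the Gram matrix of the associated quadratic
form Q in 2n variables (with integer entries N), then the rank of M_Q modulo p is at
most n. -/
theorem stmt_8 (D : ℤ) (hsq : Squarefree D) (hD0 : D ≠ 0) (hD1 : D ≠ 1)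
    (K : Type*) [Field K] [Algebra ℚ K] (sd : K) (hsd : sd ^ 2 = (D : K))
    (hgen : ∀ x : K, ∃ a b : ℚ, x = algebraMap ℚ K a + algebraMap ℚ K b * sd)
    (τ : K →ₐ[ℚ] K) (hτ : τ sd = -sd)
    (p : ℕ) (hp : p.Prime) (hpD : (p : ℤ) ∣ D)
    (n : ℕ) (A B C : Matrix (Fin n) (Fin n) K) (hA : A.IsSymm) (hC : C.IsSymm)
    (ω : K) (hω : ω = if D % 4 = 1 then (1 + sd) / 2 else sd)
    (MG T MQ : Matrix (Fin n ⊕ Fin n) (Fin n ⊕ Fin n) K)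
    (hMG : MG = Matrix.fromBlocks A B Bᵀ C)
    (hT : T = Matrix.fromBlocks 1 (ω • (1 : Matrix (Fin n) (Fin n) K))
                1 (τ ω • (1 : Matrix (Fin n) (Fin n) K)))
    (hMQ : MQ = Tᵀ * MG * T)
    -- G is integral:
    (hdiag : ∀ i, A i i ∈ integralClosure ℤ K ∧ C i i ∈ integralClosure ℤ K)
    (hoff : ∀ i j, i ≠ j → 2 * A i j ∈ integralClosure ℤ K ∧
      2 * C i j ∈ integralClosure ℤ K)
    (hB : ∀ i j, 2 * B i j ∈ integralClosure ℤ K)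
    -- G is ℤ-valued:
    (hZval : ∀ v : Fin n → K, (∀ i, v i ∈ integralClosure ℤ K) →
      ∃ m : ℤ, dotProduct (Sum.elim v fun i => τ (v i))
        (MG.mulVec (Sum.elim v fun i => τ (v i))) = (m : K))
    -- N is the integer matrix of entries of M_Q:
    (N : Matrix (Fin n ⊕ Fin n) (Fin n ⊕ Fin n) ℤ)
    (hN : ∀ i j, ((N i j : ℤ) : K) = MQ i j) :
    (N.map (Int.cast : ℤ → ZMod p)).rank ≤ n := by
  haveI : CharZero K := charZero_of_injective_algebraMap (algebraMap ℚ K).injective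
  haveI : Fact p.Prime := ⟨hp⟩
  have hgen' : ∀ x : K, ∃ a b : ℚ, x = (a:K) + (b:K) * sd := by
    intro x
    obtain ⟨a, b, h⟩ := hgen x
    exact ⟨a, b, by rwa [eq_ratCast, eq_ratCast] at h⟩
  have huniq := uniq_coords D hsq hD0 hD1 sd hsd
  have hpZ : Prime (p : ℤ) := Nat.prime_iff_prime_int.mp hp
  -- entry formulas for MQ
  have hE : ∀ i j : Fin n,
      (MQ (Sum.inl i) (Sum.inl j) = A i j + B i j + B j i + C i j) ∧
      (MQ (Sum.inl i) (Sum.inr j) = ω*(A i j + B j i) + (τ ω)*(B i j + C i j)) ∧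
      (MQ (Sum.inr i) (Sum.inl j) = ω*(A i j + B i j) + (τ ω)*(B j i + C i j)) ∧
      (MQ (Sum.inr i) (Sum.inr j) = ω^2*(A i j) + ω*(τ ω)*(B i j + B j i) + (τ ω)^2*(C i j)) := by
    intro i j
    subst hMQ hT hMG
    refine ⟨?_, ?_, ?_, ?_⟩ <;>
    · simp [Matrix.fromBlocks_transpose, Matrix.fromBlocks_multiply, Matrix.smul_mul,
        Matrix.mul_smul, Matrix.transpose_one, Matrix.add_apply, Matrix.smul_apply,
        Matrix.transpose_apply, smul_eq_mul, Matrix.fromBlocks_apply₁₁,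
        Matrix.fromBlocks_apply₁₂, Matrix.fromBlocks_apply₂₁, Matrix.fromBlocks_apply₂₂]
      ring
  -- the reduced "omega" scalar
  set c' : ZMod p := if D % 4 = 1 then (2 : ZMod p)⁻¹ else 0 with hc'
  -- key entrywise congruences
  have key : ∀ i j : Fin n,
      ((N (Sum.inl i) (Sum.inr j) : ℤ) : ZMod p) = c' * ((N (Sum.inl i) (Sum.inl j) : ℤ) : ZMod p) ∧
      ((N (Sum.inr i) (Sum.inl j) : ℤ) : ZMod p) = c' * ((N (Sum.inl i) (Sum.inl j) : ℤ) : ZMod p) ∧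
      ((N (Sum.inr i) (Sum.inr j) : ℤ) : ZMod p) = c' * c' * ((N (Sum.inl i) (Sum.inl j) : ℤ) : ZMod p) := by
    intro i j
    obtain ⟨u1, v1, hx1⟩ := hgen' (A i j)
    obtain ⟨u2, v2, hx2⟩ := hgen' (B i j)
    obtain ⟨u3, v3, hx3⟩ := hgen' (B j i)
    obtain ⟨u4, v4, hx4⟩ := hgen' (C i j)
    -- integrality of doubled entries
    have hi1 : IsIntegral ℤ (2 * A i j) := by
      by_cases hij : i = j
      · subst hij
        have h := (hdiag i).1
        rw [two_mul]
        exact IsIntegral.add h h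
      · exact (hoff i j hij).1
    have hi2 : IsIntegral ℤ (2 * B i j) := hB i j
    have hi3 : IsIntegral ℤ (2 * B j i) := hB j i
    have hi4 : IsIntegral ℤ (2 * C i j) := by
      by_cases hij : i = j
      · subst hij
        have h := (hdiag i).2
        rw [two_mul]
        exact IsIntegral.add h h
      · exact (hoff i j hij).2
    obtain ⟨⟨U1, hU1⟩, ⟨V1, hV1⟩, hd1⟩ := int_coords D hsq sd hsd τ hτ _ hi1 (2*u1) (2*v1)
      (by rw [hx1]; push_cast; ring)
    obtain ⟨⟨U2, hU2⟩, ⟨V2, hV2⟩, hd2⟩ := int_coords D hsq sd hsd τ hτ _ hi2 (2*u2) (2*v2)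
      (by rw [hx2]; push_cast; ring)
    obtain ⟨⟨U3, hU3⟩, ⟨V3, hV3⟩, hd3⟩ := int_coords D hsq sd hsd τ hτ _ hi3 (2*u3) (2*v3)
      (by rw [hx3]; push_cast; ring)
    obtain ⟨⟨U4, hU4⟩, ⟨V4, hV4⟩, hd4⟩ := int_coords D hsq sd hsd τ hτ _ hi4 (2*u4) (2*v4)
      (by rw [hx4]; push_cast; ring)
    -- the four K-equations
    have k1 : (((N (Sum.inl i) (Sum.inl j) : ℚ)) : K) = A i j + B i j + B j i + C i j := by
      push_cast
      rw [hN]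
      exact (hE i j).1
    have k2 : (((N (Sum.inl i) (Sum.inr j) : ℚ)) : K) = ω*(A i j + B j i) + (τ ω)*(B i j + C i j) := by
      push_cast
      rw [hN]
      exact (hE i j).2.1
    have k3 : (((N (Sum.inr i) (Sum.inl j) : ℚ)) : K) = ω*(A i j + B i j) + (τ ω)*(B j i + C i j) := by
      push_cast
      rw [hN]
      exact (hE i j).2.2.1
    have k4 : (((N (Sum.inr i) (Sum.inr j) : ℚ)) : K)
        = ω^2*(A i j) + ω*(τ ω)*(B i j + B j i) + (τ ω)^2*(C i j) := by
      push_cast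
      rw [hN]
      exact (hE i j).2.2.2
    by_cases hD4 : D % 4 = 1
    · -- ω = (1+sd)/2
      have hpodd : p ≠ 2 := by
        intro hp2
        rw [hp2] at hpD
        omega
      have hw : ω = ((1/2 : ℚ):K) + ((1/2 : ℚ):K)*sd := by
        rw [hω, if_pos hD4]
        push_cast
        ring
      have hτω : τ ω = ((1/2 : ℚ):K) - ((1/2 : ℚ):K)*sd := by
        rw [hω, if_pos hD4, map_div₀, _root_.map_add, _root_.map_one, hτ, _root_.map_ofNat]
        push_cast
        ring
      obtain ⟨r1, r1s, r2, r2s, r3, r3s, r4, r4s⟩ :=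
        entry_relations D sd hsd huniq (1/2) (1/2) ω (τ ω) _ _ _ _ hw hτω
          u1 v1 u2 v2 u3 v3 u4 v4 hx1 hx2 hx3 hx4 _ _ _ _ k1 k2 k3 k4
      -- integer congruences
      have hnodvd4 : ¬ ((p:ℤ) ∣ 4) := by
        intro hd
        have h2 : (p:ℤ) ∣ 2 := hpZ.dvd_of_dvd_pow (n := 2) (by norm_num; exact_mod_cast hd)
        have := Int.le_of_dvd (by norm_num) h2
        have := hp.two_le
        omega
      have div_of : ∀ X Y : ℤ, X * 4 = D * Y → (p:ℤ) ∣ X := by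
        intro X Y hXY
        have : (p:ℤ) ∣ X * 4 := hXY ▸ Dvd.dvd.mul_right hpD Y
        rcases (hpZ.dvd_mul).mp this with h | h
        · exact h
        · exact absurd h hnodvd4
      have d1 : (p:ℤ) ∣ 2 * N (Sum.inl i) (Sum.inr j) - N (Sum.inl i) (Sum.inl j) := by
        apply div_of _ (V1 + V3 - V2 - V4)
        have : (((2 * N (Sum.inl i) (Sum.inr j) - N (Sum.inl i) (Sum.inl j)) * 4 : ℤ) : ℚ)
            = ((D * (V1 + V3 - V2 - V4) : ℤ) : ℚ) := by
          push_cast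
          linear_combination 8*r2 - 4*r1 - (D:ℚ)*hV1 - (D:ℚ)*hV3 + (D:ℚ)*hV2 + (D:ℚ)*hV4
        exact_mod_cast this
      have d2 : (p:ℤ) ∣ 2 * N (Sum.inr i) (Sum.inl j) - N (Sum.inl i) (Sum.inl j) := by
        apply div_of _ (V1 + V2 - V3 - V4)
        have : (((2 * N (Sum.inr i) (Sum.inl j) - N (Sum.inl i) (Sum.inl j)) * 4 : ℤ) : ℚ)
            = ((D * (V1 + V2 - V3 - V4) : ℤ) : ℚ) := by
          push_cast
          linear_combination 8*r3 - 4*r1 - (D:ℚ)*hV1 - (D:ℚ)*hV2 + (D:ℚ)*hV3 + (D:ℚ)*hV4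
        exact_mod_cast this
      have d3 : (p:ℤ) ∣ 4 * N (Sum.inr i) (Sum.inr j) - N (Sum.inl i) (Sum.inl j) := by
        apply div_of _ (U1 + U4 - U2 - U3 + 2*(V1 - V4))
        have : (((4 * N (Sum.inr i) (Sum.inr j) - N (Sum.inl i) (Sum.inl j)) * 4 : ℤ) : ℚ)
            = ((D * (U1 + U4 - U2 - U3 + 2*(V1 - V4)) : ℤ) : ℚ) := by
          push_cast
          linear_combination 16*r4 - 4*r1 - (D:ℚ)*hU1 - (D:ℚ)*hU4 + (D:ℚ)*hU2 + (D:ℚ)*hU3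
            - 2*(D:ℚ)*hV1 + 2*(D:ℚ)*hV4
        exact_mod_cast this
      -- pass to ZMod p
      have h2ne : (2 : ZMod p) ≠ 0 := by
        intro h2
        have : ((2 : ℤ) : ZMod p) = 0 := by push_cast; exact h2
        rw [ZMod.intCast_zmod_eq_zero_iff_dvd] at this
        have := Int.le_of_dvd (by norm_num) this
        have := hp.two_le
        omega
      have z1 : ((2 * N (Sum.inl i) (Sum.inr j) - N (Sum.inl i) (Sum.inl j) : ℤ) : ZMod p) = 0 :=
        (ZMod.intCast_zmod_eq_zero_iff_dvd _ p).mpr d1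
      have z2 : ((2 * N (Sum.inr i) (Sum.inl j) - N (Sum.inl i) (Sum.inl j) : ℤ) : ZMod p) = 0 :=
        (ZMod.intCast_zmod_eq_zero_iff_dvd _ p).mpr d2
      have z3 : ((4 * N (Sum.inr i) (Sum.inr j) - N (Sum.inl i) (Sum.inl j) : ℤ) : ZMod p) = 0 :=
        (ZMod.intCast_zmod_eq_zero_iff_dvd _ p).mpr d3
      push_cast at z1 z2 z3
      rw [hc', if_pos hD4]
      refine ⟨?_, ?_, ?_⟩
      · field_simp
        linear_combination z1
      · field_simp
        linear_combination z2
      · field_simp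
        linear_combination z3
    · -- ω = sd
      have hw : ω = ((0 : ℚ):K) + ((1 : ℚ):K)*sd := by
        rw [hω, if_neg hD4]
        push_cast
        ring
      have hτω : τ ω = ((0 : ℚ):K) - ((1 : ℚ):K)*sd := by
        rw [hω, if_neg hD4, hτ]
        push_cast
        ring
      obtain ⟨r1, r1s, r2, r2s, r3, r3s, r4, r4s⟩ :=
        entry_relations D sd hsd huniq 0 1 ω (τ ω) _ _ _ _ hw hτω
          u1 v1 u2 v2 u3 v3 u4 v4 hx1 hx2 hx3 hx4 _ _ _ _ k1 k2 k3 k4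
      have d1 : (p:ℤ) ∣ N (Sum.inl i) (Sum.inr j) := by
        by_cases hp2 : p = 2
        · -- p = 2
          subst hp2
          have h2D : (2:ℤ) ∣ D := by exact_mod_cast hpD
          obtain ⟨⟨P1, hP1⟩, ⟨Q1, hQ1⟩⟩ := hd1 h2D
          obtain ⟨⟨P2, hP2⟩, ⟨Q2, hQ2⟩⟩ := hd2 h2D
          obtain ⟨Dh, hDh⟩ := h2D
          have hq : ((N (Sum.inl i) (Sum.inr j) : ℤ) : ℚ) = ((2 * (Dh * (Q1 - Q2)) : ℤ) : ℚ) := by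
            push_cast
            have hDhq : (D:ℚ) = 2 * (Dh:ℚ) := by exact_mod_cast hDh
            linear_combination r2 - r4s - 2*(Dh:ℚ)*hQ1 + 2*(Dh:ℚ)*hQ2 + (2*(v1 - v2))*hDhq
          have : N (Sum.inl i) (Sum.inr j) = 2 * (Dh * (Q1 - Q2)) := by exact_mod_cast hq
          exact ⟨_, by push_cast; exact this⟩
        · have div_of : ∀ X Y : ℤ, X * 4 = D * Y → (p:ℤ) ∣ X := by
            intro X Y hXY
            have : (p:ℤ) ∣ X * 4 := hXY ▸ Dvd.dvd.mul_right hpD Y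
            rcases (hpZ.dvd_mul).mp this with h | h
            · exact h
            · exfalso
              have h2 : (p:ℤ) ∣ 2 := hpZ.dvd_of_dvd_pow (n := 2) (by norm_num; exact_mod_cast h)
              have := Int.le_of_dvd (by norm_num) h2
              have := hp.two_le
              omega
          apply div_of _ (V1 + V3 - V2 - V4)
          have : ((N (Sum.inl i) (Sum.inr j) * 4 : ℤ) : ℚ)
              = ((D * (V1 + V3 - V2 - V4) : ℤ) : ℚ) := by
            push_cast
            linear_combination 4*r2 - (D:ℚ)*hV1 - (D:ℚ)*hV3 + (D:ℚ)*hV2 + (D:ℚ)*hV4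
          exact_mod_cast this
      have d2 : (p:ℤ) ∣ N (Sum.inr i) (Sum.inl j) := by
        by_cases hp2 : p = 2
        · subst hp2
          have h2D : (2:ℤ) ∣ D := by exact_mod_cast hpD
          obtain ⟨⟨P1, hP1⟩, ⟨Q1, hQ1⟩⟩ := hd1 h2D
          obtain ⟨⟨P2, hP2⟩, ⟨Q2, hQ2⟩⟩ := hd2 h2D
          obtain ⟨Dh, hDh⟩ := h2D
          have hq : ((N (Sum.inr i) (Sum.inl j) : ℤ) : ℚ) = ((2 * (Dh * (Q1 + Q2)) : ℤ) : ℚ) := by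
            push_cast
            have hDhq : (D:ℚ) = 2 * (Dh:ℚ) := by exact_mod_cast hDh
            linear_combination r3 - 2*(Dh:ℚ)*hQ1 - 2*(Dh:ℚ)*hQ2 + (2*(v1 + v2))*hDhq - (D:ℚ)*r1s
          have : N (Sum.inr i) (Sum.inl j) = 2 * (Dh * (Q1 + Q2)) := by exact_mod_cast hq
          exact ⟨_, by push_cast; exact this⟩
        · have div_of : ∀ X Y : ℤ, X * 4 = D * Y → (p:ℤ) ∣ X := by
            intro X Y hXY
            have : (p:ℤ) ∣ X * 4 := hXY ▸ Dvd.dvd.mul_right hpD Y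
            rcases (hpZ.dvd_mul).mp this with h | h
            · exact h
            · exfalso
              have h2 : (p:ℤ) ∣ 2 := hpZ.dvd_of_dvd_pow (n := 2) (by norm_num; exact_mod_cast h)
              have := Int.le_of_dvd (by norm_num) h2
              have := hp.two_le
              omega
          apply div_of _ (V1 + V2 - V3 - V4)
          have : ((N (Sum.inr i) (Sum.inl j) * 4 : ℤ) : ℚ)
              = ((D * (V1 + V2 - V3 - V4) : ℤ) : ℚ) := by
            push_cast
            linear_combination 4*r3 - (D:ℚ)*hV1 - (D:ℚ)*hV2 + (D:ℚ)*hV3 + (D:ℚ)*hV4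
          exact_mod_cast this
      have d3 : (p:ℤ) ∣ N (Sum.inr i) (Sum.inr j) := by
        by_cases hp2 : p = 2
        · subst hp2
          have h2D : (2:ℤ) ∣ D := by exact_mod_cast hpD
          obtain ⟨⟨P1, hP1⟩, ⟨Q1, hQ1⟩⟩ := hd1 h2D
          obtain ⟨⟨P2, hP2⟩, ⟨Q2, hQ2⟩⟩ := hd2 h2D
          obtain ⟨Dh, hDh⟩ := h2D
          have hq : ((N (Sum.inr i) (Sum.inr j) : ℤ) : ℚ) = ((2 * (Dh * (P1 - P2)) : ℤ) : ℚ) := by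
            push_cast
            have hDhq : (D:ℚ) = 2 * (Dh:ℚ) := by exact_mod_cast hDh
            linear_combination r4 - 2*(Dh:ℚ)*hP1 + 2*(Dh:ℚ)*hP2 + (2*(u1 - u2))*hDhq - (D:ℚ)*r2s
          have : N (Sum.inr i) (Sum.inr j) = 2 * (Dh * (P1 - P2)) := by exact_mod_cast hq
          exact ⟨_, by push_cast; exact this⟩
        · have div_of : ∀ X Y : ℤ, X * 4 = D * Y → (p:ℤ) ∣ X := by
            intro X Y hXY
            have : (p:ℤ) ∣ X * 4 := hXY ▸ Dvd.dvd.mul_right hpD Y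
            rcases (hpZ.dvd_mul).mp this with h | h
            · exact h
            · exfalso
              have h2 : (p:ℤ) ∣ 2 := hpZ.dvd_of_dvd_pow (n := 2) (by norm_num; exact_mod_cast h)
              have := Int.le_of_dvd (by norm_num) h2
              have := hp.two_le
              omega
          apply div_of _ (U1 + U4 - U2 - U3)
          have : ((N (Sum.inr i) (Sum.inr j) * 4 : ℤ) : ℚ)
              = ((D * (U1 + U4 - U2 - U3) : ℤ) : ℚ) := by
            push_cast
            linear_combination 4*r4 - (D:ℚ)*hU1 - (D:ℚ)*hU4 + (D:ℚ)*hU2 + (D:ℚ)*hU3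
          exact_mod_cast this
      have z1 := (ZMod.intCast_zmod_eq_zero_iff_dvd _ p).mpr d1
      have z2 := (ZMod.intCast_zmod_eq_zero_iff_dvd _ p).mpr d2
      have z3 := (ZMod.intCast_zmod_eq_zero_iff_dvd _ p).mpr d3
      rw [hc', if_neg hD4]
      exact ⟨by rw [z1]; ring, by rw [z2]; ring, by rw [z3]; ring⟩
  -- rank bound via factorization
  classical
  let W : Matrix (Fin n) (Fin n) (ZMod p) := Matrix.of fun i j => ((N (Sum.inl i) (Sum.inl j) : ℤ) : ZMod p)
  let P : Matrix (Fin n ⊕ Fin n) (Fin n) (ZMod p) :=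
    Matrix.of fun ii k => Sum.elim (fun i => if i = k then (1 : ZMod p) else 0)
      (fun i => if i = k then c' else 0) ii
  let Qm : Matrix (Fin n) (Fin n ⊕ Fin n) (ZMod p) :=
    Matrix.of fun k jj => Sum.elim (fun j => W k j) (fun j => c' * W k j) jj
  have hfact : N.map (Int.cast : ℤ → ZMod p) = P * Qm := by
    ext ii jj
    cases ii with
    | inl i =>
      cases jj with
      | inl j =>
        simp [Matrix.mul_apply, P, Qm, W, Matrix.map_apply, ite_mul]
      | inr j =>
        simp [Matrix.mul_apply, P, Qm, W, Matrix.map_apply, ite_mul]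
        exact (key i j).1
    | inr i =>
      cases jj with
      | inl j =>
        simp [Matrix.mul_apply, P, Qm, W, Matrix.map_apply, ite_mul]
        exact (key i j).2.1
      | inr j =>
        simp [Matrix.mul_apply, P, Qm, W, Matrix.map_apply, ite_mul]
        exact ((key i j).2.2.trans (mul_assoc _ _ _))
  calc (N.map (Int.cast : ℤ → ZMod p)).rank = (P * Qm).rank := by rw [hfact]
    _ ≤ P.rank := Matrix.rank_mul_le_left P Qm
    _ ≤ Fintype.card (Fin n) := Matrix.rank_le_card_width P
    _ = n := Fintype.card_fin n
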